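/- Let v : ℝⁿ → ℝᵐ be an affine 1-Lipschitz map. Then for every nonempty subset A ⊆ ℝⁿ and every 1-Lipschitz map u : A → ℝᵐ there exists a 1-Lipschitz map ũ : ℝⁿ → ℝᵐ with ũ(x) = u(x) for all x ∈ A and v(x) − ũ(x) ∈ closure(convexHull{v(z) − u(z) : z ∈ A}) for all x ∈ ℝⁿ. -/

import Mathlib

open Finset RealInnerProductSpace

section aux
variable {F : Type*} [NormedAddCommGroup F] [InnerProductSpace ℝ F]

/-- weighted variance identity -/
lemma kz_var {ι : Type*} (s : Finset ι) (w : ι → ℝ) (hw : ∑ i ∈ s, w i = 1)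
    (z : ι → F) (c : F) :
    ∑ i ∈ s, w i * ‖c - z i‖ ^ 2
      = ‖c - ∑ j ∈ s, w j • z j‖ ^ 2
        + ∑ i ∈ s, w i * ‖(∑ j ∈ s, w j • z j) - z i‖ ^ 2 := by
  set zb := ∑ j ∈ s, w j • z j with hzb
  have hzero : ∑ i ∈ s, w i • (zb - z i) = 0 := by
    simp only [smul_sub, Finset.sum_sub_distrib, ← Finset.sum_smul, hw, one_smul, ← hzb,
      sub_self]
  have hmid : ∑ i ∈ s, w i * (2 * ⟪c - zb, zb - z i⟫) = 0 := by
    have : ∑ i ∈ s, w i * (2 * ⟪c - zb, zb - z i⟫)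
        = 2 * ⟪c - zb, ∑ i ∈ s, w i • (zb - z i)⟫ := by
      rw [inner_sum, Finset.mul_sum]
      refine Finset.sum_congr rfl fun i _ => ?_
      rw [real_inner_smul_right]; ring
    rw [this, hzero, inner_zero_right, mul_zero]
  calc ∑ i ∈ s, w i * ‖c - z i‖ ^ 2
      = ∑ i ∈ s, (w i * ‖c - zb‖ ^ 2 + (w i * (2 * ⟪c - zb, zb - z i⟫)
          + w i * ‖zb - z i‖ ^ 2)) := by
        refine Finset.sum_congr rfl fun i _ => ?_
        have h1 : c - z i = (c - zb) + (zb - z i) := by abel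
        rw [h1, norm_add_sq_real]; ring
    _ = (∑ i ∈ s, w i) * ‖c - zb‖ ^ 2 + (∑ i ∈ s, w i * (2 * ⟪c - zb, zb - z i⟫)
          + ∑ i ∈ s, w i * ‖zb - z i‖ ^ 2) := by
        rw [Finset.sum_add_distrib, Finset.sum_add_distrib, Finset.sum_mul]
    _ = ‖c - zb‖ ^ 2 + ∑ i ∈ s, w i * ‖zb - z i‖ ^ 2 := by
        rw [hw, hmid, one_mul, zero_add]

/-- variance as double sum -/
lemma kz_var_double {ι : Type*} (s : Finset ι) (w : ι → ℝ) (hw : ∑ i ∈ s, w i = 1)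
    (z : ι → F) :
    ∑ i ∈ s, w i * ‖(∑ j ∈ s, w j • z j) - z i‖ ^ 2
      = (1/2) * ∑ j ∈ s, ∑ i ∈ s, w j * (w i * ‖z j - z i‖ ^ 2) := by
  set zb := ∑ j ∈ s, w j • z j with hzb
  have h1 : ∀ j ∈ s, ∑ i ∈ s, w i * ‖z j - z i‖ ^ 2
      = ‖z j - zb‖ ^ 2 + ∑ i ∈ s, w i * ‖zb - z i‖ ^ 2 := fun j _ => kz_var s w hw z (z j)
  have h2 : ∑ j ∈ s, w j * (∑ i ∈ s, w i * ‖z j - z i‖ ^ 2)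
      = ∑ j ∈ s, w j * ‖z j - zb‖ ^ 2 + (∑ j ∈ s, w j) * (∑ i ∈ s, w i * ‖zb - z i‖ ^ 2) := by
    rw [Finset.sum_mul, ← Finset.sum_add_distrib]
    refine Finset.sum_congr rfl fun j hj => ?_
    rw [h1 j hj]; ring
  have h3 : ∑ j ∈ s, w j * ‖z j - zb‖ ^ 2 = ∑ j ∈ s, w j * ‖zb - z j‖ ^ 2 := by
    refine Finset.sum_congr rfl fun j _ => by rw [norm_sub_rev]
  have h4 : ∑ j ∈ s, ∑ i ∈ s, w j * (w i * ‖z j - z i‖ ^ 2)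
      = ∑ j ∈ s, w j * (∑ i ∈ s, w i * ‖z j - z i‖ ^ 2) := by
    refine Finset.sum_congr rfl fun j _ => by rw [Finset.mul_sum]
  rw [h4, h2, h3, hw, one_mul]; ring

end aux

section aux2
variable {E F : Type*} [NormedAddCommGroup E] [InnerProductSpace ℝ E]
  [NormedAddCommGroup F] [InnerProductSpace ℝ F]

/-- comparison of variances under pointwise-Lipschitz data -/
lemma kz_var_le {ι : Type*} (s : Finset ι) (w : ι → ℝ) (hw : ∑ i ∈ s, w i = 1)
    (hw0 : ∀ i ∈ s, 0 ≤ w i) (z : ι → F) (z' : ι → E)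
    (hzz : ∀ i ∈ s, ∀ j ∈ s, ‖z i - z j‖ ≤ ‖z' i - z' j‖) :
    ∑ i ∈ s, w i * ‖(∑ j ∈ s, w j • z j) - z i‖ ^ 2
      ≤ ∑ i ∈ s, w i * ‖(∑ j ∈ s, w j • z' j) - z' i‖ ^ 2 := by
  rw [kz_var_double s w hw z, kz_var_double s w hw z']
  have : ∑ j ∈ s, ∑ i ∈ s, w j * (w i * ‖z j - z i‖ ^ 2)
      ≤ ∑ j ∈ s, ∑ i ∈ s, w j * (w i * ‖z' j - z' i‖ ^ 2) := by
    refine Finset.sum_le_sum fun j hj => Finset.sum_le_sum fun i hi => ?_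
    have hn : ‖z j - z i‖ ^ 2 ≤ ‖z' j - z' i‖ ^ 2 :=
      pow_le_pow_left₀ (norm_nonneg _) (hzz j hj i hi) 2
    have := mul_nonneg (hw0 j hj) (hw0 i hi)
    nlinarith [hw0 j hj, hw0 i hi]
  linarith

/-- The key estimate: for any convex combination, the candidate point
`V x₀ - ∑ w i • (V (p i) - g i)` satisfies the averaged Kirszbraun inequality. -/
lemma kz_key (V : E →ᵃ[ℝ] F) (hVlip : ∀ x y : E, ‖V x - V y‖ ≤ ‖x - y‖)
    {ι : Type*} (s : Finset ι) (p : ι → E) (g : ι → F)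
    (hg : ∀ i ∈ s, ∀ j ∈ s, ‖g i - g j‖ ≤ ‖p i - p j‖)
    (w : ι → ℝ) (hw0 : ∀ i ∈ s, 0 ≤ w i) (hw : ∑ i ∈ s, w i = 1) (x₀ : E) :
    ∑ i ∈ s, w i * ‖(V x₀ - ∑ j ∈ s, w j • (V (p j) - g j)) - g i‖ ^ 2
      ≤ ∑ i ∈ s, w i * ‖x₀ - p i‖ ^ 2 := by
  set gb := ∑ j ∈ s, w j • g j with hgb
  set pb := ∑ j ∈ s, w j • p j with hpb
  have hV : ∑ j ∈ s, w j • V (p j) = V pb := by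
    have h1 := Finset.affineCombination_eq_linear_combination s p w hw
    have h2 := Finset.affineCombination_eq_linear_combination s (fun j => V (p j)) w hw
    have h3 := Finset.map_affineCombination s p w hw V
    rw [h1] at h3
    rw [show (fun j => V (p j)) = (⇑V ∘ p) from rfl] at h2
    rw [← h2, ← h3, hpb]
  have hy : (V x₀ - ∑ j ∈ s, w j • (V (p j) - g j)) = (V x₀ - V pb) + gb := by
    have : ∑ j ∈ s, w j • (V (p j) - g j) = (∑ j ∈ s, w j • V (p j)) - gb := by
      simp [smul_sub, Finset.sum_sub_distrib, hgb]
    rw [this, hV]; abel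
  have hvar1 := kz_var s w hw g (V x₀ - ∑ j ∈ s, w j • (V (p j) - g j))
  have hvar2 := kz_var s w hw p x₀
  have hcompare := kz_var_le s w hw hw0 g p hg
  have hnorm : ‖(V x₀ - ∑ j ∈ s, w j • (V (p j) - g j)) - gb‖ ^ 2 ≤ ‖x₀ - pb‖ ^ 2 := by
    have : (V x₀ - ∑ j ∈ s, w j • (V (p j) - g j)) - gb = V x₀ - V pb := by
      rw [hy]; abel
    rw [this]
    exact pow_le_pow_left₀ (norm_nonneg _) (hVlip x₀ pb) 2
  rw [hvar1, hvar2]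
  rw [← hgb] at hvar1 ⊢
  rw [← hpb] at hvar2 ⊢
  linarith

end aux2

section lp
variable {F : Type*} [NormedAddCommGroup F] [NormedSpace ℝ F]

/-- finite LP duality via Hahn–Banach separation -/
lemma kz_lp {ι : Type*} [Fintype ι] (Φ : ι → F → ℝ)
    (hconv : ∀ i a b (x y : F), 0 ≤ a → 0 ≤ b → a + b = 1 →
      Φ i (a • x + b • y) ≤ a * Φ i x + b * Φ i y)
    (hcont : ∀ i, Continuous (Φ i))
    {D : Set F} (hD : Convex ℝ D) (hDcomp : IsCompact D) (hDne : D.Nonempty)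
    (h : ∀ w : ι → ℝ, (∀ i, 0 ≤ w i) → ∑ i, w i = 1 → ∃ y ∈ D, ∑ i, w i * Φ i y ≤ 0) :
    ∃ y ∈ D, ∀ i, Φ i y ≤ 0 := by
  classical
  by_contra hcon
  set U : Set (ι → ℝ) := {t | ∃ y ∈ D, ∀ i, Φ i y ≤ t i} with hU
  have hUconv : Convex ℝ U := by
    rintro t₁ ⟨y₁, hy₁, ht₁⟩ t₂ ⟨y₂, hy₂, ht₂⟩ a b ha hb hab
    refine ⟨a • y₁ + b • y₂, hD hy₁ hy₂ ha hb hab, fun i => ?_⟩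
    calc Φ i (a • y₁ + b • y₂) ≤ a * Φ i y₁ + b * Φ i y₂ := hconv i a b y₁ y₂ ha hb hab
      _ ≤ a * t₁ i + b * t₂ i := by
          have := mul_le_mul_of_nonneg_left (ht₁ i) ha
          have := mul_le_mul_of_nonneg_left (ht₂ i) hb
          simpa [Pi.add_apply, Pi.smul_apply, smul_eq_mul] using add_le_add ‹_› ‹_›
      _ = (a • t₁ + b • t₂) i := by simp [smul_eq_mul]
  have hUclosed : IsClosed U := by
    refine IsSeqClosed.isClosed ?_
    rintro t tl hmem htend
    choose y hyD hyle using hmem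
    obtain ⟨a, haD, φ, hφ, hay⟩ := hDcomp.tendsto_subseq hyD
    refine ⟨a, haD, fun i => ?_⟩
    have h1 : Filter.Tendsto (fun k => Φ i (y (φ k))) Filter.atTop (nhds (Φ i a)) :=
      ((hcont i).continuousAt.tendsto).comp hay
    have h2 : Filter.Tendsto (fun k => t (φ k) i) Filter.atTop (nhds (tl i)) := by
      have := (htend.comp hφ.tendsto_atTop)
      exact ((continuous_apply i).continuousAt.tendsto).comp this
    exact le_of_tendsto_of_tendsto' h1 h2 fun k => hyle (φ k) i
  have hU0 : (0 : ι → ℝ) ∉ U := by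
    rintro ⟨y, hyD, hy⟩
    exact hcon ⟨y, hyD, fun i => by simpa using hy i⟩
  obtain ⟨f, c, hfc, hfU⟩ := geometric_hahn_banach_point_closed hUconv hUclosed hU0
  rw [map_zero] at hfc
  set lam : ι → ℝ := fun i => f (Pi.single i 1) with hlam
  have hrep : ∀ t : ι → ℝ, f t = ∑ i, t i * lam i := by
    intro t
    have ht : t = ∑ i, t i • (Pi.single i (1:ℝ) : ι → ℝ) := by
      funext j
      simp [Pi.single_apply, Finset.sum_apply]
    calc f t = f (∑ i, t i • (Pi.single i (1:ℝ) : ι → ℝ)) := by rw [← ht]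
      _ = ∑ i, t i * lam i := by
          rw [map_sum]
          exact Finset.sum_congr rfl fun i _ => by rw [map_smul]; rfl
  obtain ⟨y₀, hy₀⟩ := hDne
  have hUup : ∀ t ∈ U, ∀ (s : ℝ) (i : ι), 0 ≤ s → t + s • (Pi.single i (1:ℝ) : ι → ℝ) ∈ U := by
    rintro t ⟨y, hyD, hy⟩ s i hs
    refine ⟨y, hyD, fun j => ?_⟩
    have h0 : (0:ℝ) ≤ s * (Pi.single i (1:ℝ) : ι → ℝ) j := by
      refine mul_nonneg hs ?_
      rcases eq_or_ne j i with rfl | hne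
      · simp
      · simp [Pi.single_apply, hne]
    have := hy j
    simp only [Pi.add_apply, Pi.smul_apply, smul_eq_mul]
    linarith
  have htD : (fun i => Φ i y₀) ∈ U := ⟨y₀, hy₀, fun i => le_rfl⟩
  have hlam0 : ∀ i, 0 ≤ lam i := by
    intro i
    by_contra hneg
    push_neg at hneg
    have hlne : lam i ≠ 0 := ne_of_lt hneg
    have h1 : c < f (fun i => Φ i y₀) := hfU _ htD
    have h2 : 0 ≤ (c - f (fun i => Φ i y₀)) / lam i :=
      div_nonneg_iff.mpr (Or.inr ⟨by linarith, hneg.le⟩)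
    have hs0 : 0 ≤ (c - f (fun i => Φ i y₀)) / lam i + 1 := by linarith
    have hmem := hUup _ htD ((c - f (fun i => Φ i y₀)) / lam i + 1) i hs0
    have hgt := hfU _ hmem
    rw [map_add, map_smul, smul_eq_mul] at hgt
    have hfval : f (Pi.single i (1:ℝ) : ι → ℝ) = lam i := rfl
    rw [hfval] at hgt
    have hsl : ((c - f (fun i => Φ i y₀)) / lam i + 1) * lam i
        = (c - f (fun i => Φ i y₀)) + lam i := by
      rw [add_mul, one_mul, div_mul_cancel₀ _ hlne]
    rw [hsl] at hgt
    linarith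
  have hT : 0 < ∑ i, lam i := by
    rcases lt_or_ge 0 (∑ i, lam i) with h' | h'
    · exact h'
    have hsumz : ∑ i, lam i = 0 := le_antisymm h' (Finset.sum_nonneg fun i _ => hlam0 i)
    have hz : ∀ i ∈ Finset.univ, lam i = 0 :=
      (Finset.sum_eq_zero_iff_of_nonneg (fun i _ => hlam0 i)).mp hsumz
    have hf0 : f (fun i => Φ i y₀) = 0 := by
      rw [hrep]
      exact Finset.sum_eq_zero fun i _ => by rw [hz i (Finset.mem_univ i), mul_zero]
    have h1 := hfU _ htD
    rw [hf0] at h1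
    linarith
  set T := ∑ i, lam i with hTdef
  obtain ⟨y, hyD, hsum⟩ := h (fun i => lam i / T) (fun i => div_nonneg (hlam0 i) hT.le)
    (by rw [← Finset.sum_div]; field_simp; exact hTdef.symm)
  have hsum' : ∑ i, lam i * Φ i y ≤ 0 := by
    have heq : ∑ i, (lam i / T) * Φ i y = (∑ i, lam i * Φ i y) / T := by
      rw [Finset.sum_div]
      exact Finset.sum_congr rfl fun i _ => by ring
    rw [heq] at hsum
    rcases div_nonpos_iff.mp hsum with ⟨h1, h2⟩ | ⟨h1, h2⟩
    · linarith
    · exact h1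
  have hmem : (fun i => Φ i y) ∈ U := ⟨y, hyD, fun i => le_rfl⟩
  have hgt := hfU _ hmem
  rw [hrep] at hgt
  have hgt' : c < ∑ i, lam i * Φ i y := by
    convert hgt using 2 with i
    ring
  linarith

end lp

section onept
variable {E F : Type*} [NormedAddCommGroup E] [InnerProductSpace ℝ E]
  [NormedAddCommGroup F] [InnerProductSpace ℝ F]

lemma kz_sq_convex (c x y : F) (a b : ℝ) (ha : 0 ≤ a) (hb : 0 ≤ b) (hab : a + b = 1) :
    ‖a • x + b • y - c‖ ^ 2 ≤ a * ‖x - c‖ ^ 2 + b * ‖y - c‖ ^ 2 := by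
  have hc : a • x + b • y - c = a • (x - c) + b • (y - c) := by
    rw [smul_sub, smul_sub, sub_add_sub_comm, ← add_smul, hab, one_smul]
  rw [hc, norm_add_sq_real]
  rw [norm_smul, norm_smul, real_inner_smul_left, real_inner_smul_right]
  simp only [Real.norm_eq_abs, abs_of_nonneg ha, abs_of_nonneg hb]
  have hI := real_inner_le_norm (x - c) (y - c)
  have hb' : b = 1 - a := by linarith
  subst hb'
  nlinarith [mul_nonneg (mul_nonneg ha hb) (sub_nonneg.mpr hI),
    mul_nonneg (mul_nonneg ha hb) (sq_nonneg (‖x - c‖ - ‖y - c‖))]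

/-- finite one-point strengthened Kirszbraun extension -/
lemma kz_finite_onept (V : E →ᵃ[ℝ] F) (hVlip : ∀ x y : E, ‖V x - V y‖ ≤ ‖x - y‖)
    (B : Finset E) (hBne : B.Nonempty) (g : E → F)
    (hg : ∀ p ∈ B, ∀ q ∈ B, ‖g p - g q‖ ≤ ‖p - q‖) (x₀ : E) :
    ∃ y : F, (∀ b ∈ B, ‖y - g b‖ ≤ ‖x₀ - b‖) ∧
      V x₀ - y ∈ convexHull ℝ ((fun z => V z - g z) '' ↑B) := by
  classical
  set H : Set F := convexHull ℝ ((fun z => V z - g z) '' ↑B) with hH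
  set D : Set F := (fun c => V x₀ - c) '' H with hD
  have hHconv : Convex ℝ H := convex_convexHull ℝ _
  have hHcomp : IsCompact H := by
    refine Set.Finite.isCompact_convexHull (𝕜 := ℝ) ?_
    exact (B.finite_toSet.image _)
  have hDconv : Convex ℝ D := by
    rintro y₁ ⟨c₁, hc₁, rfl⟩ y₂ ⟨c₂, hc₂, rfl⟩ a b ha hb hab
    refine ⟨a • c₁ + b • c₂, hHconv hc₁ hc₂ ha hb hab, ?_⟩
    rw [smul_sub, smul_sub, sub_add_sub_comm, ← add_smul, hab, one_smul]
  have hDcomp : IsCompact D := hHcomp.image (by continuity)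
  obtain ⟨b₀, hb₀⟩ := hBne
  have hDne : D.Nonempty :=
    ⟨V x₀ - (V b₀ - g b₀), ⟨V b₀ - g b₀, subset_convexHull ℝ _ ⟨b₀, hb₀, rfl⟩, rfl⟩⟩
  set Φ : ↥B → F → ℝ := fun i y => ‖y - g i‖ ^ 2 - ‖x₀ - (i : E)‖ ^ 2 with hΦ
  have key : ∃ y ∈ D, ∀ i : ↥B, Φ i y ≤ 0 := by
    refine kz_lp Φ ?_ ?_ hDconv hDcomp hDne ?_
    · intro i a b x y ha hb hab
      have := kz_sq_convex (g i) x y a b ha hb hab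
      simp only [hΦ]
      nlinarith [this]
    · intro i
      have : Continuous fun y : F => ‖y - g i‖ := (continuous_id.sub continuous_const).norm
      continuity
    · intro w hw0 hw1
      set y : F := V x₀ - ∑ j : ↥B, w j • (V j - g j) with hy
      have hymem : y ∈ D := by
        refine ⟨∑ j : ↥B, w j • (V j - g j), ?_, rfl⟩
        refine hHconv.sum_mem (fun i _ => hw0 i) hw1 fun i _ => ?_
        exact subset_convexHull ℝ _ ⟨i, i.2, rfl⟩
      refine ⟨y, hymem, ?_⟩
      have hkey := kz_key V hVlip (Finset.univ : Finset ↥B) (fun i => (i : E))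
        (fun i => g i) (fun i _ j _ => hg i i.2 j j.2) w (fun i _ => hw0 i)
        hw1 x₀
      have hexp : ∑ i : ↥B, w i * Φ i y
          = ∑ i : ↥B, w i * ‖y - g i‖ ^ 2 - ∑ i : ↥B, w i * ‖x₀ - (i : E)‖ ^ 2 := by
        rw [← Finset.sum_sub_distrib]
        exact Finset.sum_congr rfl fun i _ => by simp only [hΦ]; ring
      rw [hexp]
      simp only [hy]
      linarith [hkey]
  obtain ⟨y, hyD, hyle⟩ := key
  obtain ⟨c, hc, hyc⟩ := hyD
  refine ⟨y, fun b hb => ?_, ?_⟩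
  · have h := hyle ⟨b, hb⟩
    simp only [hΦ] at h
    nlinarith [norm_nonneg (y - g b), norm_nonneg (x₀ - b)]
  · rw [← hyc]
    simpa using hc

end onept

section onept2
variable {E F : Type*} [NormedAddCommGroup E] [InnerProductSpace ℝ E]
  [NormedAddCommGroup F] [InnerProductSpace ℝ F] [FiniteDimensional ℝ F]

/-- one-point strengthened Kirszbraun extension, arbitrary subset -/
lemma kz_onept (V : E →ᵃ[ℝ] F) (hVlip : ∀ x y : E, ‖V x - V y‖ ≤ ‖x - y‖)
    (B : Set E) (hBne : B.Nonempty) (g : E → F)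
    (hg : ∀ p ∈ B, ∀ q ∈ B, ‖g p - g q‖ ≤ ‖p - q‖) (x₀ : E) :
    ∃ y : F, (∀ b ∈ B, ‖y - g b‖ ≤ ‖x₀ - b‖) ∧
      V x₀ - y ∈ closure (convexHull ℝ ((fun z => V z - g z) '' B)) := by
  classical
  set Dcl : Set F := {y | V x₀ - y ∈ closure (convexHull ℝ ((fun z => V z - g z) '' B))}
    with hDcl
  have hDclosed : IsClosed Dcl := by
    have : Dcl = (fun y => V x₀ - y) ⁻¹' closure (convexHull ℝ ((fun z => V z - g z) '' B)) :=
      rfl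
    rw [this]
    exact IsClosed.preimage (by continuity) isClosed_closure
  set Z : ↥B → Set F := fun b => Metric.closedBall (g b) ‖x₀ - (b : E)‖ ∩ Dcl with hZ
  have hZclosed : ∀ b : ↥B, IsClosed (Z b) :=
    fun b => Metric.isClosed_closedBall.inter hDclosed
  obtain ⟨b₀, hb₀⟩ := hBne
  have hscomp : IsCompact (Z ⟨b₀, hb₀⟩) :=
    (isCompact_closedBall _ _).inter_right hDclosed
  have hne : (Z ⟨b₀, hb₀⟩ ∩ ⋂ b : ↥B, Z b).Nonempty := by
    by_contra hempty
    rw [Set.not_nonempty_iff_eq_empty] at hempty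
    obtain ⟨t, ht⟩ := hscomp.elim_finite_subfamily_closed Z hZclosed hempty
    -- build the finite set of points
    set Q : Finset E := insert b₀ (t.image (fun b : ↥B => (b : E))) with hQ
    have hQB : ↑Q ⊆ B := by
      intro p hp
      simp only [hQ, Finset.coe_insert, Set.mem_insert_iff, Finset.coe_image,
        Set.mem_image] at hp
      rcases hp with rfl | ⟨b, _, rfl⟩
      · exact hb₀
      · exact b.2
    obtain ⟨y, hy1, hy2⟩ := kz_finite_onept V hVlip Q ⟨b₀, Finset.mem_insert_self _ _⟩ g
      (fun p hp q hq => hg p (hQB hp) q (hQB hq)) x₀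
    have hymem : y ∈ Dcl := by
      refine subset_closure ?_
      refine convexHull_mono ?_ hy2
      exact Set.image_mono hQB
    have : y ∈ Z ⟨b₀, hb₀⟩ ∩ ⋂ b ∈ t, Z b := by
      constructor
      · refine ⟨?_, hymem⟩
        rw [Metric.mem_closedBall, dist_eq_norm]
        exact hy1 b₀ (Finset.mem_insert_self _ _)
      · refine Set.mem_iInter₂.mpr fun b hb => ⟨?_, hymem⟩
        rw [Metric.mem_closedBall, dist_eq_norm]
        exact hy1 b (Finset.mem_insert_of_mem (Finset.mem_image_of_mem _ hb))
    rw [ht] at this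
    exact this
  obtain ⟨y, _, hy⟩ := hne
  rw [Set.mem_iInter] at hy
  refine ⟨y, fun b hb => ?_, ?_⟩
  · have := (hy ⟨b, hb⟩).1
    rwa [Metric.mem_closedBall, dist_eq_norm] at this
  · exact (hy ⟨b₀, hb₀⟩).2

end onept2

theorem stmt_10 (n m : ℕ)
    (v : EuclideanSpace ℝ (Fin n) → EuclideanSpace ℝ (Fin m))
    (hvaff : ∀ x y : EuclideanSpace ℝ (Fin n), ∀ t ∈ Set.Icc (0 : ℝ) 1,
      v (t • x + (1 - t) • y) = t • v x + (1 - t) • v y)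
    (hvlip : ∀ x y : EuclideanSpace ℝ (Fin n), ‖v x - v y‖ ≤ ‖x - y‖)
    (A : Set (EuclideanSpace ℝ (Fin n))) (hA : A.Nonempty)
    (u : EuclideanSpace ℝ (Fin n) → EuclideanSpace ℝ (Fin m))
    (hu : ∀ x ∈ A, ∀ y ∈ A, ‖u x - u y‖ ≤ ‖x - y‖) :
    ∃ uext : EuclideanSpace ℝ (Fin n) → EuclideanSpace ℝ (Fin m),
      (∀ x y : EuclideanSpace ℝ (Fin n), ‖uext x - uext y‖ ≤ ‖x - y‖) ∧
      (∀ x ∈ A, uext x = u x) ∧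
      (∀ x : EuclideanSpace ℝ (Fin n),
        v x - uext x ∈ closure (convexHull ℝ ((fun z => v z - u z) '' A))) := by
  classical
  -- v is continuous
  have hlip : LipschitzWith 1 v := by
    refine LipschitzWith.of_dist_le_mul fun x y => ?_
    rw [dist_eq_norm, dist_eq_norm, NNReal.coe_one, one_mul]
    exact hvlip x y
  -- v preserves midpoints
  have hmid : ∀ x y : EuclideanSpace ℝ (Fin n), v (midpoint ℝ x y) = midpoint ℝ (v x) (v y) := by
    intro x y
    have h := hvaff x y (1/2) ⟨by norm_num, by norm_num⟩
    rw [midpoint_eq_smul_add, midpoint_eq_smul_add, invOf_eq_inv, smul_add, smul_add]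
    norm_num at h
    convert h using 2 <;> norm_num
  set V : EuclideanSpace ℝ (Fin n) →ᵃ[ℝ] EuclideanSpace ℝ (Fin m) := AffineMap.ofMapMidpoint v hmid hlip.continuous with hV
  have hVeq : ⇑V = v := rfl
  have hVlip : ∀ x y : EuclideanSpace ℝ (Fin n), ‖V x - V y‖ ≤ ‖x - y‖ := by rw [hVeq]; exact hvlip
  set C : Set (EuclideanSpace ℝ (Fin m)) := closure (convexHull ℝ ((fun z => v z - u z) '' A)) with hC
  have hCconv : Convex ℝ C := (convex_convexHull ℝ _).closure
  -- finite extension lemma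
  have FIN : ∀ Q : Finset (EuclideanSpace ℝ (Fin n)), ∃ h : EuclideanSpace ℝ (Fin n) → EuclideanSpace ℝ (Fin m),
      (∀ a ∈ A, h a = u a) ∧
      (∀ p ∈ A ∪ ↑Q, ∀ q ∈ A ∪ ↑Q, ‖h p - h q‖ ≤ ‖p - q‖) ∧
      (∀ p ∈ A ∪ ↑Q, v p - h p ∈ C) := by
    intro Q
    induction Q using Finset.induction_on with
    | empty =>
        refine ⟨u, fun a _ => rfl, ?_, ?_⟩
        · simpa using hu
        · intro p hp
          simp only [Finset.coe_empty, Set.union_empty] at hp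
          exact subset_closure (subset_convexHull ℝ _ ⟨p, hp, rfl⟩)
    | @insert x Q hx ih =>
        obtain ⟨h, h1, h2, h3⟩ := ih
        by_cases hmem : x ∈ A ∪ ↑Q
        · have hset : A ∪ ↑(insert x Q) = A ∪ ↑Q := by
            rw [Finset.coe_insert, Set.union_insert, Set.insert_eq_of_mem hmem]
          rw [hset]
          exact ⟨h, h1, h2, h3⟩
        · obtain ⟨y, hy1, hy2⟩ := kz_onept V hVlip (A ∪ ↑Q)
            ⟨hA.choose, Set.mem_union_left _ hA.choose_spec⟩ h h2 x
          have hysub : closure (convexHull ℝ ((fun z => V z - h z) '' (A ∪ ↑Q))) ⊆ C := by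
            refine closure_minimal (convexHull_min ?_ hCconv) isClosed_closure
            rintro _ ⟨p, hp, rfl⟩
            rw [hVeq]
            exact h3 p hp
          have hxy : v x - y ∈ C := hysub hy2
          have hset : A ∪ ↑(insert x Q) = insert x (A ∪ ↑Q) := by
            rw [Finset.coe_insert, Set.union_insert]
          refine ⟨Function.update h x y, ?_, ?_, ?_⟩
          · intro a ha
            have hne : a ≠ x := fun hax => hmem (hax ▸ Set.mem_union_left _ ha)
            rw [Function.update_of_ne hne]
            exact h1 a ha
          · intro p hp q hq
            rw [hset] at hp hq
            rcases hp with rfl | hp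
            · rcases hq with rfl | hq
              · simp
              · have hne : q ≠ p := fun hqp => hmem (hqp ▸ hq)
                rw [Function.update_self, Function.update_of_ne hne]
                exact hy1 q hq
            · rcases hq with rfl | hq
              · have hne : p ≠ q := fun hpq => hmem (hpq ▸ hp)
                rw [Function.update_self, Function.update_of_ne hne, norm_sub_rev,
                  norm_sub_rev p q]
                exact hy1 p hp
              · have hnep : p ≠ x := fun hpq => hmem (hpq ▸ hp)
                have hneq : q ≠ x := fun hqp => hmem (hqp ▸ hq)
                rw [Function.update_of_ne hnep, Function.update_of_ne hneq]
                exact h2 p hp q hq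
          · intro p hp
            rw [hset] at hp
            rcases hp with rfl | hp
            · rw [Function.update_self]
              exact hxy
            · have hne : p ≠ x := fun hpq => hmem (hpq ▸ hp)
              rw [Function.update_of_ne hne]
              exact h3 p hp
  -- product space compactness
  obtain ⟨a₀, ha₀⟩ := hA
  set K : EuclideanSpace ℝ (Fin n) → Set (EuclideanSpace ℝ (Fin m)) := fun x => Metric.closedBall (u a₀) ‖x - a₀‖ with hK
  have hScomp : IsCompact (Set.pi Set.univ K) :=
    isCompact_univ_pi fun x => isCompact_closedBall _ _
  set Z : EuclideanSpace ℝ (Fin n) × EuclideanSpace ℝ (Fin n) → Set (EuclideanSpace ℝ (Fin n) → EuclideanSpace ℝ (Fin m)) := fun i =>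
    {h | ‖h i.1 - h i.2‖ ≤ ‖i.1 - i.2‖ ∧ (i.1 ∈ A → h i.1 = u i.1) ∧ v i.1 - h i.1 ∈ C}
    with hZdef
  have hZc : ∀ i, IsClosed (Z i) := by
    intro i
    have e1 : IsClosed {h : EuclideanSpace ℝ (Fin n) → EuclideanSpace ℝ (Fin m) | ‖h i.1 - h i.2‖ ≤ ‖i.1 - i.2‖} :=
      isClosed_le (((continuous_apply i.1).sub (continuous_apply i.2)).norm) continuous_const
    have e2 : IsClosed {h : EuclideanSpace ℝ (Fin n) → EuclideanSpace ℝ (Fin m) | i.1 ∈ A → h i.1 = u i.1} := by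
      by_cases hi : i.1 ∈ A
      · have : {h : EuclideanSpace ℝ (Fin n) → EuclideanSpace ℝ (Fin m) | i.1 ∈ A → h i.1 = u i.1} = {h | h i.1 = u i.1} := by
          ext h; simp [hi]
        rw [this]
        exact isClosed_eq (continuous_apply i.1) continuous_const
      · have : {h : EuclideanSpace ℝ (Fin n) → EuclideanSpace ℝ (Fin m) | i.1 ∈ A → h i.1 = u i.1} = Set.univ := by
          ext h; simp [hi]
        rw [this]
        exact isClosed_univ
    have e3 : IsClosed {h : EuclideanSpace ℝ (Fin n) → EuclideanSpace ℝ (Fin m) | v i.1 - h i.1 ∈ C} :=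
      IsClosed.preimage (continuous_const.sub (continuous_apply i.1)) isClosed_closure
    exact e1.inter (e2.inter e3)
  have hmain : (Set.pi Set.univ K ∩ ⋂ i, Z i).Nonempty := by
    by_contra hempty
    rw [Set.not_nonempty_iff_eq_empty] at hempty
    obtain ⟨t, ht⟩ := hScomp.elim_finite_subfamily_closed Z hZc hempty
    set Q : Finset (EuclideanSpace ℝ (Fin n)) := t.image Prod.fst ∪ t.image Prod.snd with hQ
    obtain ⟨h, h1, h2, h3⟩ := FIN Q
    set hh : EuclideanSpace ℝ (Fin n) → EuclideanSpace ℝ (Fin m) := fun x => if x ∈ A ∪ ↑Q then h x else u a₀ with hhdef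
    have hha : ∀ p ∈ A ∪ (↑Q : Set (EuclideanSpace ℝ (Fin n))), hh p = h p := fun p hp => if_pos hp
    have hhS : hh ∈ Set.pi Set.univ K := by
      intro x _
      simp only [hK, Metric.mem_closedBall, dist_eq_norm]
      by_cases hx : x ∈ A ∪ (↑Q : Set (EuclideanSpace ℝ (Fin n)))
      · rw [hha x hx]
        have hl := h2 x hx a₀ (Set.mem_union_left _ ha₀)
        rw [h1 a₀ ha₀] at hl
        exact hl
      · have : hh x = u a₀ := if_neg hx
        rw [this]
        simp [norm_nonneg]
    have hhZ : hh ∈ ⋂ i ∈ t, Z i := by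
      refine Set.mem_iInter₂.mpr fun i hi => ?_
      have hp1 : i.1 ∈ A ∪ (↑Q : Set (EuclideanSpace ℝ (Fin n))) := by
        refine Set.mem_union_right _ ?_
        simp only [hQ, Finset.coe_union, Set.mem_union, Finset.coe_image, Set.mem_image]
        exact Or.inl ⟨i, hi, rfl⟩
      have hp2 : i.2 ∈ A ∪ (↑Q : Set (EuclideanSpace ℝ (Fin n))) := by
        refine Set.mem_union_right _ ?_
        simp only [hQ, Finset.coe_union, Set.mem_union, Finset.coe_image, Set.mem_image]
        exact Or.inr ⟨i, hi, rfl⟩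
      refine ⟨?_, ?_, ?_⟩
      · rw [hha _ hp1, hha _ hp2]
        exact h2 _ hp1 _ hp2
      · intro hiA
        rw [hha _ hp1]
        exact h1 _ hiA
      · rw [hha _ hp1]
        exact h3 _ hp1
    have : hh ∈ Set.pi Set.univ K ∩ ⋂ i ∈ t, Z i := ⟨hhS, hhZ⟩
    rw [ht] at this
    exact this
  obtain ⟨uext, _, hZmem⟩ := hmain
  rw [Set.mem_iInter] at hZmem
  exact ⟨uext, fun x y => (hZmem (x, y)).1, fun x hx => (hZmem (x, x)).2.1 hx,
    fun x => (hZmem (x, x)).2.2⟩
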